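/- For the game CSG({1,...,N}) with N ≥ 3 and any nonnegative integers k, ℓ: if the number of vertices of S(1,k,ℓ), namely k+ℓ+2, is ≡ 0 mod (N+1), then its Grundy value is 0; if k+ℓ+2 ≡ 1 mod (N+1), then its Grundy value is 1; otherwise its Grundy value is strictly greater than 1. -/

import Mathlib

open SimpleGraph

/-- The minimum excludant of a set of naturals. -/
noncomputable def mex (s : Set ℕ) : ℕ := sInf {n | n ∉ s}

/-- The graph induced on a set of vertices is connected. -/
def ConnOn {V : Type*} (G : SimpleGraph V) (s : Set V) : Prop := (G.induce s).Connected

/-- A legal move in the connected subtraction game CSG(L) on the graph `G`: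
from remaining vertex set `s`, remove the (nonempty) connected set `s \ t` whose
cardinality lies in `L`, leaving `t`, which must be empty or induce a connected graph. -/
def CsgMove {V : Type*} [DecidableEq V] (G : SimpleGraph V) (L : Set ℕ)
    (s t : Finset V) : Prop :=
  t ⊆ s ∧ (s \ t).Nonempty ∧ (s \ t).card ∈ L ∧
    ConnOn G (↑(s \ t) : Set V) ∧ (t = ∅ ∨ ConnOn G (↑t : Set V))

/-- The Grundy value of the position with remaining vertex set `s` in the game
CSG(L) played on `G`, defined by the mex recursion over all legal moves. -/
noncomputable def csgGrundy {V : Type*} [DecidableEq V] (G : SimpleGraph V) (L : Set ℕ)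
    (s : Finset V) : ℕ :=
  mex (Set.range fun t : {t : Finset V // CsgMove G L s t} =>
    have : t.1.card < s.card := by
      obtain ⟨x, hx⟩ := t.2.2.1
      rw [Finset.mem_sdiff] at hx
      exact Finset.card_lt_card ((Finset.ssubset_iff_of_subset t.2.1).2 ⟨x, hx.1, hx.2⟩)
    csgGrundy G L t.1)
termination_by s.card
decreasing_by exact this

/-- The subdivided star with `t` branches of lengths `l 0, …, l (t-1)` appended
to a central vertex `none`. -/
def subdividedStar {t : ℕ} (l : Fin t → ℕ) :
    SimpleGraph (Option (Σ i : Fin t, Fin (l i))) :=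
  SimpleGraph.fromRel fun a b =>
    match a, b with
    | none, some ⟨_, j⟩ => (j : ℕ) = 0
    | some ⟨i, j⟩, some ⟨i', j'⟩ => (i : ℕ) = (i' : ℕ) ∧ (j : ℕ) + 1 = (j' : ℕ)
    | _, _ => False

/-- The graph `G` with a path on `k` new vertices appended at the vertex `u`. -/
def appendPath {V : Type*} (G : SimpleGraph V) (u : V) (k : ℕ) :
    SimpleGraph (V ⊕ Fin k) :=
  SimpleGraph.fromRel fun a b =>
    match a, b with
    | Sum.inl x, Sum.inl y => G.Adj x y
    | Sum.inl x, Sum.inr j => x = u ∧ (j : ℕ) = 0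
    | Sum.inr j, Sum.inr j' => (j : ℕ) + 1 = (j' : ℕ)
    | _, _ => False

open Finset


section
variable {k l : ℕ}

abbrev L (k l : ℕ) : Fin 3 → ℕ := ![1, k, l]
abbrev V (k l : ℕ) := Option (Σ i : Fin 3, Fin (L k l i))

lemma sigma_val_iff {i i' : Fin 3} {j : Fin (L k l i)} {j' : Fin (L k l i')} :
    (⟨i, j⟩ : Σ i : Fin 3, Fin (L k l i)) = ⟨i', j'⟩ ↔ ((i : ℕ) = (i' : ℕ) ∧ (j : ℕ) = (j' : ℕ)) := by
  constructor
  · intro h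
    have h1 := congrArg (fun x : Σ i : Fin 3, Fin (L k l i) => (x.1 : ℕ)) h
    have h2 := congrArg (fun x : Σ i : Fin 3, Fin (L k l i) => (x.2 : ℕ)) h
    exact ⟨h1, h2⟩
  · rintro ⟨h1, h2⟩
    have : i = i' := Fin.ext h1
    subst this
    exact congrArg _ (Fin.ext h2)


abbrev G (k l : ℕ) : SimpleGraph (V k l) := subdividedStar (L k l)

lemma adj_none_some {i : Fin 3} {j : Fin (L k l i)} :
    (G k l).Adj none (some ⟨i, j⟩) ↔ (j : ℕ) = 0 := by
  simp [G, subdividedStar, SimpleGraph.fromRel_adj]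

lemma sigma_eq_of_val_eq {i i' : Fin 3} {j : Fin (L k l i)} {j' : Fin (L k l i')}
    (hi : (i : ℕ) = (i' : ℕ)) (hj : (j : ℕ) = (j' : ℕ)) :
    (⟨i, j⟩ : Σ i : Fin 3, Fin (L k l i)) = ⟨i', j'⟩ := by
  have : i = i' := Fin.ext hi
  subst this
  exact congrArg _ (Fin.ext hj)

lemma adj_some_some {i i' : Fin 3} {j : Fin (L k l i)} {j' : Fin (L k l i')} :
    (G k l).Adj (some ⟨i, j⟩) (some ⟨i', j'⟩) ↔
      (i : ℕ) = (i' : ℕ) ∧ ((j : ℕ) + 1 = (j' : ℕ) ∨ (j' : ℕ) + 1 = (j : ℕ)) := by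
  simp only [G, subdividedStar, SimpleGraph.fromRel_adj]
  constructor
  · rintro ⟨hne, h | h⟩
    · exact ⟨h.1, Or.inl h.2⟩
    · exact ⟨h.1.symm, Or.inr h.2⟩
  · rintro ⟨hi, h | h⟩
    · refine ⟨fun he => ?_, Or.inl ⟨hi, h⟩⟩
      have := congrArg (fun x : V k l => (x.elim 0 fun y => (y.2 : ℕ) + 1)) he
      simp at this; omega
    · refine ⟨fun he => ?_, Or.inr ⟨hi.symm, h⟩⟩
      have := congrArg (fun x : V k l => (x.elim 0 fun y => (y.2 : ℕ) + 1)) he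
      simp at this; omega

/-- destructure any neighbour of a branch vertex -/
lemma adj_some_cases {i : Fin 3} {j : Fin (L k l i)} {v : V k l}
    (h : (G k l).Adj (some ⟨i, j⟩) v) :
    (v = none ∧ (j : ℕ) = 0) ∨
      ∃ j' : Fin (L k l i), v = some ⟨i, j'⟩ ∧
        ((j : ℕ) + 1 = (j' : ℕ) ∨ (j' : ℕ) + 1 = (j : ℕ)) := by
  match v with
  | none => exact Or.inl ⟨rfl, adj_none_some.mp h.symm⟩
  | some ⟨i', j'⟩ =>
    right
    obtain ⟨hi, hj⟩ := adj_some_some.mp h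
    have : i = i' := Fin.ext hi
    subst this
    exact ⟨j', rfl, hj⟩

/-- cut lemma -/
lemma cut_lemma {W : Type*} (H : SimpleGraph W) (s : Set W) (P : W → Prop)
    {x y : s} (hr : (H.induce s).Reachable x y) (hx : P x.1) (hy : ¬ P y.1) :
    ∃ u v : W, u ∈ s ∧ v ∈ s ∧ P u ∧ ¬ P v ∧ H.Adj u v := by
  obtain ⟨w⟩ := hr
  induction w with
  | nil => exact absurd hx hy
  | @cons a b c hab p ih =>
    by_cases hPb : P b.1
    · exact ih hPb hy
    · exact ⟨a.1, b.1, a.2, b.2, hx, hPb, hab⟩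


def segSet (k l : ℕ) (i0 : Fin 3) (lo hi : ℕ) : Finset (V k l) :=
  Finset.univ.filter
    (fun v => ∃ j : Fin (L k l i0), v = some ⟨i0, j⟩ ∧ lo ≤ (j : ℕ) ∧ (j : ℕ) < hi)

def starSet (k l : ℕ) (a b c : ℕ) : Finset (V k l) :=
  Finset.univ.filter
    (fun v => v = none ∨ ∃ (i : Fin 3) (j : Fin (L k l i)), v = some ⟨i, j⟩ ∧ (j : ℕ) < ![a, b, c] i)

lemma none_not_mem_segSet {i0 lo hi} : (none : V k l) ∉ segSet k l i0 lo hi := by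
  simp [segSet]

lemma some_mem_segSet {i0 lo hi} {i : Fin 3} {j : Fin (L k l i)} :
    some ⟨i, j⟩ ∈ segSet k l i0 lo hi ↔ i = i0 ∧ lo ≤ (j : ℕ) ∧ (j : ℕ) < hi := by
  simp only [segSet, Finset.mem_filter, Finset.mem_univ, true_and, Option.some.injEq]
  constructor
  · rintro ⟨j', hj', h1, h2⟩
    obtain ⟨hi, hj⟩ := sigma_val_iff.mp hj'
    exact ⟨Fin.ext hi, by omega, by omega⟩
  · rintro ⟨rfl, h1, h2⟩
    exact ⟨j, rfl, h1, h2⟩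

lemma none_mem_starSet {a b c} : (none : V k l) ∈ starSet k l a b c := by
  simp [starSet]

lemma some_mem_starSet {a b c} {i : Fin 3} {j : Fin (L k l i)} :
    some ⟨i, j⟩ ∈ starSet k l a b c ↔ (j : ℕ) < ![a, b, c] i := by
  simp only [starSet, Finset.mem_filter, Finset.mem_univ, true_and, Option.some.injEq,
    reduceCtorEq, false_or]
  constructor
  · rintro ⟨i', j', hj', h⟩
    obtain ⟨hi, hj⟩ := sigma_val_iff.mp hj'
    have : i = i' := Fin.ext hi
    subst this
    omega
  · intro h
    exact ⟨i, j, rfl, h⟩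

lemma card_fin_filter (n lo hi : ℕ) (h : hi ≤ n) :
    (Finset.univ.filter (fun j : Fin n => lo ≤ (j : ℕ) ∧ (j : ℕ) < hi)).card = hi - lo := by
  rw [← Nat.card_Ico lo hi]
  refine Finset.card_bij (fun j _ => (j : ℕ)) ?_ ?_ ?_
  · intro a ha
    simp only [Finset.mem_filter] at ha
    simp only [Finset.mem_Ico]
    exact ha.2
  · intro a ha b hb hab
    exact Fin.ext hab
  · intro m hm
    simp only [Finset.mem_Ico] at hm
    exact ⟨⟨m, lt_of_lt_of_le hm.2 h⟩, by simp [hm.1, hm.2], rfl⟩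

def emb (k l : ℕ) (i0 : Fin 3) : Fin (L k l i0) ↪ V k l :=
  ⟨fun j => some ⟨i0, j⟩, by
    intro a b hab
    simp only [Option.some.injEq] at hab
    exact Fin.ext (sigma_val_iff.mp hab).2⟩

lemma segSet_eq_map {i0 : Fin 3} {lo hi : ℕ} :
    segSet k l i0 lo hi
      = (Finset.univ.filter (fun j : Fin (L k l i0) => lo ≤ (j : ℕ) ∧ (j : ℕ) < hi)).map
          (emb k l i0) := by
  ext v
  simp only [Finset.mem_map, Finset.mem_filter, Finset.mem_univ, true_and, emb,
    Function.Embedding.coeFn_mk]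
  match v with
  | none =>
    simp only [reduceCtorEq, and_false, exists_false, iff_false]
    exact none_not_mem_segSet
  | some ⟨i, j⟩ =>
    rw [some_mem_segSet]
    constructor
    · rintro ⟨rfl, h1, h2⟩
      exact ⟨j, ⟨h1, h2⟩, rfl⟩
    · rintro ⟨j', hj', hj⟩
      have hj : (⟨i0, j'⟩ : Σ i : Fin 3, Fin (L k l i)) = ⟨i, j⟩ := Option.some.inj hj
      obtain ⟨hi, hjj⟩ := sigma_val_iff.mp hj.symm
      exact ⟨Fin.ext hi, by omega, by omega⟩

lemma card_segSet {i0 : Fin 3} {lo hi : ℕ} (h : hi ≤ L k l i0) :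
    (segSet k l i0 lo hi).card = hi - lo := by
  rw [segSet_eq_map, Finset.card_map, card_fin_filter _ _ _ h]

lemma seg_disj {i0 i1 : Fin 3} {lo hi lo' hi' : ℕ} (h : i0 ≠ i1) :
    Disjoint (segSet k l i0 lo hi) (segSet k l i1 lo' hi') := by
  rw [Finset.disjoint_left]
  intro v hv hv'
  match v with
  | none => exact none_not_mem_segSet hv
  | some ⟨i, j⟩ =>
    rw [some_mem_segSet] at hv hv'
    exact h (hv.1 ▸ hv'.1)

lemma starSet_decomp {a b c : ℕ} :
    starSet k l a b c
      = insert none (segSet k l 0 0 a ∪ segSet k l 1 0 b ∪ segSet k l 2 0 c) := by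
  ext v
  match v with
  | none => simp [none_mem_starSet]
  | some ⟨i, j⟩ =>
    simp only [Finset.mem_insert, reduceCtorEq, Finset.mem_union, false_or,
      some_mem_starSet, some_mem_segSet]
    fin_cases i <;> simp <;> omega

lemma card_starSet {a b c : ℕ} (ha : a ≤ 1) (hb : b ≤ k) (hc : c ≤ l) :
    (starSet k l a b c).card = 1 + a + b + c := by
  rw [starSet_decomp]
  rw [Finset.card_insert_of_notMem (by
    simp only [Finset.mem_union, not_or]
    exact ⟨⟨none_not_mem_segSet, none_not_mem_segSet⟩, none_not_mem_segSet⟩)]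
  rw [Finset.card_union_of_disjoint (by
    apply Finset.disjoint_union_left.mpr
    exact ⟨seg_disj (by decide), seg_disj (by decide)⟩)]
  rw [Finset.card_union_of_disjoint (seg_disj (by decide))]
  rw [card_segSet (by simpa using ha), card_segSet (by simpa using hb),
    card_segSet (by simpa using hc)]
  omega

lemma mem_segSet_elim {i0 lo hi} {v : V k l} (h : v ∈ segSet k l i0 lo hi) :
    ∃ j : Fin (L k l i0), v = some ⟨i0, j⟩ ∧ lo ≤ (j : ℕ) ∧ (j : ℕ) < hi := by
  simpa [segSet] using h

lemma mem_starSet_elim {a b c} {v : V k l} (h : v ∈ starSet k l a b c) :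
    v = none ∨ ∃ (i : Fin 3) (j : Fin (L k l i)), v = some ⟨i, j⟩ ∧ (j : ℕ) < ![a, b, c] i := by
  simpa [starSet] using h

lemma reach_chain (X : Finset (V k l)) (i : Fin 3) :
    ∀ (d : ℕ) (j j' : Fin (L k l i)) (hj : some ⟨i, j⟩ ∈ X) (hj' : some ⟨i, j'⟩ ∈ X),
      (j : ℕ) + d = (j' : ℕ) →
      (∀ t : Fin (L k l i), (j : ℕ) ≤ (t : ℕ) → (t : ℕ) ≤ (j' : ℕ) → some ⟨i, t⟩ ∈ X) →
      ((G k l).induce ↑X).Reachable ⟨some ⟨i, j⟩, by simpa using hj⟩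
        ⟨some ⟨i, j'⟩, by simpa using hj'⟩ := by
  intro d
  induction d with
  | zero =>
    intro j j' hj hj' hd _
    have : j = j' := Fin.ext (by omega)
    subst this
    rfl
  | succ d ih =>
    intro j j' hj hj' hd hall
    have hlt : (j : ℕ) + 1 < L k l i := by
      have := j'.isLt; omega
    set j1 : Fin (L k l i) := ⟨(j : ℕ) + 1, hlt⟩ with hj1def
    have hj1 : some ⟨i, j1⟩ ∈ X := hall j1 (by simp [hj1def]) (by simp [hj1def]; omega)
    have hadj : ((G k l).induce ↑X).Adj ⟨some ⟨i, j⟩, by simpa using hj⟩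
        ⟨some ⟨i, j1⟩, by simpa using hj1⟩ := by
      simp only [comap_adj, Function.Embedding.coe_subtype]
      exact adj_some_some.mpr ⟨rfl, Or.inl (by simp [hj1def])⟩
    refine hadj.reachable.trans (ih j1 j' hj1 hj' (by simp [hj1def]; omega) ?_)
    intro t ht1 ht2
    exact hall t (by simp [hj1def] at ht1; omega) ht2

lemma connOn_starSet {a b c : ℕ} (ha : a ≤ 1) (hb : b ≤ k) (hc : c ≤ l) :
    ConnOn (G k l) ↑(starSet k l a b c) := by
  rw [ConnOn, connected_iff]
  have hnone : (none : V k l) ∈ starSet k l a b c := none_mem_starSet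
  refine ⟨?_, ⟨⟨none, by simpa using hnone⟩⟩⟩
  have key : ∀ z : ↥(↑(starSet k l a b c) : Set (V k l)),
      ((G k l).induce ↑(starSet k l a b c)).Reachable z ⟨none, by simpa using hnone⟩ := by
    rintro ⟨v, hv⟩
    rw [Finset.mem_coe] at hv
    rcases mem_starSet_elim hv with rfl | ⟨i, j, rfl, hlt⟩
    · rfl
    · have hpos : 0 < L k l i := lt_of_le_of_lt (Nat.zero_le _) j.isLt
      set j0 : Fin (L k l i) := ⟨0, hpos⟩ with hj0def
      have hj0 : some ⟨i, j0⟩ ∈ starSet k l a b c := by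
        rw [some_mem_starSet]
        have := some_mem_starSet.mp hv
        simp [hj0def]; omega
      have hchain := reach_chain (starSet k l a b c) i (j : ℕ) j0 j hj0 hv
        (by simp [hj0def]) (fun t _ ht2 => by
          rw [some_mem_starSet]
          have := some_mem_starSet.mp hv
          omega)
      have hadj : ((G k l).induce ↑(starSet k l a b c)).Adj
          ⟨some ⟨i, j0⟩, by simpa using hj0⟩ ⟨none, by simpa using hnone⟩ := by
        simp only [comap_adj, Function.Embedding.coe_subtype]
        exact (adj_none_some.mpr (by simp [hj0def])).symm
      exact (hchain.symm).trans hadj.reachable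
  intro x y
  exact (key x).trans (key y).symm

lemma connOn_segSet {i0 : Fin 3} {lo hi : ℕ} (hlh : lo < hi) (hhi : hi ≤ L k l i0) :
    ConnOn (G k l) ↑(segSet k l i0 lo hi) := by
  rw [ConnOn, connected_iff]
  have hlo : some ⟨i0, ⟨lo, by omega⟩⟩ ∈ segSet k l i0 lo hi := by
    rw [some_mem_segSet]; exact ⟨rfl, by simp, by simp; omega⟩
  refine ⟨?_, ⟨⟨_, by simpa using hlo⟩⟩⟩
  have key : ∀ z : ↥(↑(segSet k l i0 lo hi) : Set (V k l)),
      ((G k l).induce ↑(segSet k l i0 lo hi)).Reachable z ⟨_, by simpa using hlo⟩ := by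
    rintro ⟨v, hv⟩
    rw [Finset.mem_coe] at hv
    obtain ⟨j, rfl, h1, h2⟩ := mem_segSet_elim hv
    have hchain := reach_chain (segSet k l i0 lo hi) i0 ((j : ℕ) - lo) ⟨lo, by omega⟩ j hlo hv
      (by simp; omega) (fun t ht1 ht2 => by
        rw [some_mem_segSet]
        exact ⟨rfl, by simp at ht1; omega, by omega⟩)
    exact hchain.symm
  intro x y
  exact (key x).trans (key y).symm

lemma fin_dc {n : ℕ} (T : Finset (Fin n))
    (hdc : ∀ j ∈ T, ∀ j' : Fin n, (j' : ℕ) < (j : ℕ) → j' ∈ T) :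
    ∀ j : Fin n, j ∈ T ↔ (j : ℕ) < T.card := by
  intro j
  constructor
  · intro hj
    have hsub : (Finset.univ.filter (fun t : Fin n => 0 ≤ (t : ℕ) ∧ (t : ℕ) < (j : ℕ) + 1)) ⊆ T := by
      intro t ht
      simp only [Finset.mem_filter] at ht
      rcases Nat.lt_or_ge (t : ℕ) (j : ℕ) with h | h
      · exact hdc j hj t h
      · have : t = j := Fin.ext (by omega)
        exact this ▸ hj
    have := Finset.card_le_card hsub
    rw [card_fin_filter n 0 ((j : ℕ) + 1) j.isLt] at this
    omega
  · intro hj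
    by_contra hjn
    have hsub : T ⊆ Finset.univ.filter (fun t : Fin n => 0 ≤ (t : ℕ) ∧ (t : ℕ) < (j : ℕ)) := by
      intro t ht
      simp only [Finset.mem_filter, Finset.mem_univ, true_and]
      rcases Nat.lt_or_ge (j : ℕ) (t : ℕ) with h | h
      · exact absurd (hdc t ht j h) hjn
      · rcases Nat.lt_or_ge (t : ℕ) (j : ℕ) with h' | h'
        · omega
        · exact absurd ((Fin.ext (by omega : (t:ℕ) = (j:ℕ))) ▸ ht) hjn
    have := Finset.card_le_card hsub
    rw [card_fin_filter n 0 (j : ℕ) (le_of_lt j.isLt)] at this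
    omega

lemma fin_interval {n : ℕ} (T : Finset (Fin n)) (hne : T.Nonempty)
    (hic : ∀ j1 ∈ T, ∀ j3 ∈ T, ∀ j2 : Fin n, (j1 : ℕ) ≤ (j2 : ℕ) → (j2 : ℕ) ≤ (j3 : ℕ) → j2 ∈ T) :
    ∃ lo hi : ℕ, lo < hi ∧ hi ≤ n ∧ ∀ j : Fin n, (j ∈ T ↔ lo ≤ (j : ℕ) ∧ (j : ℕ) < hi) := by
  set m := T.min' hne with hm
  have hmT : m ∈ T := T.min'_mem hne
  refine ⟨(m : ℕ), (m : ℕ) + T.card, by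
    have : 0 < T.card := Finset.card_pos.mpr hne
    omega, ?_, ?_⟩
  · have hsub : T ⊆ Finset.univ.filter (fun t : Fin n => (m : ℕ) ≤ (t : ℕ) ∧ (t : ℕ) < n) := by
      intro t ht
      simp only [Finset.mem_filter, Finset.mem_univ, true_and]
      exact ⟨T.min'_le t ht, t.isLt⟩
    have := Finset.card_le_card hsub
    rw [card_fin_filter n (m : ℕ) n (le_refl n)] at this
    have := m.isLt
    omega
  · intro j
    constructor
    · intro hj
      have h1 : (m : ℕ) ≤ (j : ℕ) := T.min'_le j hj
      have hsub : (Finset.univ.filter (fun t : Fin n => (m : ℕ) ≤ (t : ℕ) ∧ (t : ℕ) < (j : ℕ) + 1)) ⊆ T := by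
        intro t ht
        simp only [Finset.mem_filter] at ht
        exact hic m hmT j hj t ht.2.1 (by omega)
      have := Finset.card_le_card hsub
      rw [card_fin_filter n (m : ℕ) ((j : ℕ) + 1) j.isLt] at this
      omega
    · rintro ⟨h1, h2⟩
      by_contra hjn
      have hsub : T ⊆ Finset.univ.filter (fun t : Fin n => (m : ℕ) ≤ (t : ℕ) ∧ (t : ℕ) < (j : ℕ)) := by
        intro t ht
        simp only [Finset.mem_filter, Finset.mem_univ, true_and]
        refine ⟨T.min'_le t ht, ?_⟩
        rcases Nat.lt_or_ge (t : ℕ) (j : ℕ) with h | h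
        · exact h
        · exact absurd (hic m hmT t ht j h1 h) hjn
      have := Finset.card_le_card hsub
      rw [card_fin_filter n (m : ℕ) (j : ℕ) (le_of_lt j.isLt)] at this
      omega

lemma branch_gap (s : Finset (V k l)) (hc : ConnOn (G k l) ↑s) (i : Fin 3)
    (jgap : Fin (L k l i)) (x y : V k l) (hx : x ∈ s) (hy : y ∈ s)
    (hPx : ∃ t : Fin (L k l i), x = some ⟨i, t⟩ ∧ (jgap : ℕ) < (t : ℕ))
    (hPy : ¬ ∃ t : Fin (L k l i), y = some ⟨i, t⟩ ∧ (jgap : ℕ) < (t : ℕ)) :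
    some ⟨i, jgap⟩ ∈ s := by
  have hr := hc.preconnected ⟨x, by simpa using hx⟩ ⟨y, by simpa using hy⟩
  obtain ⟨u, v, hu, hv, hPu, hPv, hadj⟩ :=
    cut_lemma (G k l) (↑s) (fun w => ∃ t : Fin (L k l i), w = some ⟨i, t⟩ ∧ (jgap : ℕ) < (t : ℕ))
      hr hPx hPy
  obtain ⟨t, rfl, hlt⟩ := hPu
  rcases adj_some_cases hadj with ⟨rfl, ht0⟩ | ⟨t2, rfl, hstep⟩
  · omega
  · have ht2 : ¬ ((jgap : ℕ) < (t2 : ℕ)) := fun h => hPv ⟨t2, rfl, h⟩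
    rcases hstep with h | h
    · omega
    · have : t2 = jgap := Fin.ext (by omega)
      subst this
      simpa using hv

lemma conn_classify (s : Finset (V k l)) (hc : ConnOn (G k l) ↑s) :
    (∃ a b c : ℕ, a ≤ 1 ∧ b ≤ k ∧ c ≤ l ∧ s = starSet k l a b c) ∨
    (∃ (i : Fin 3) (lo hi : ℕ), lo < hi ∧ hi ≤ L k l i ∧ s = segSet k l i lo hi) := by
  classical
  by_cases hnone : (none : V k l) ∈ s
  · left
    have hdc : ∀ (i : Fin 3) (j : Fin (L k l i)), some ⟨i, j⟩ ∈ s →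
        ∀ j' : Fin (L k l i), (j' : ℕ) < (j : ℕ) → some ⟨i, j'⟩ ∈ s := by
      intro i j hj j' hj'
      refine branch_gap s hc i j' (some ⟨i, j⟩) none hj hnone ⟨j, rfl, hj'⟩ ?_
      rintro ⟨t, ht, -⟩
      exact nomatch ht
    set T : ∀ i : Fin 3, Finset (Fin (L k l i)) :=
      fun i => Finset.univ.filter (fun j => some ⟨i, j⟩ ∈ s) with hT
    have hTmem : ∀ (i : Fin 3) (j : Fin (L k l i)), j ∈ T i ↔ ((j : ℕ) < (T i).card) := by
      intro i
      apply fin_dc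
      intro j hj j' hj'
      simp only [hT, Finset.mem_filter, Finset.mem_univ, true_and] at hj ⊢
      exact hdc i j hj j' hj'
    have hTcard : ∀ i : Fin 3, (T i).card ≤ L k l i := by
      intro i
      calc (T i).card ≤ Finset.univ.card := Finset.card_filter_le _ _
        _ = L k l i := by simp
    refine ⟨(T 0).card, (T 1).card, (T 2).card, by simpa using hTcard 0,
      by simpa using hTcard 1, by simpa using hTcard 2, ?_⟩
    ext v
    match v with
    | none => simp [hnone, none_mem_starSet]
    | some ⟨i, j⟩ =>
      rw [some_mem_starSet]
      have : (some ⟨i, j⟩ ∈ s) ↔ j ∈ T i := by simp [hT]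
      rw [this, hTmem i j]
      fin_cases i <;> simp
  · right
    obtain ⟨⟨z, hz⟩⟩ := hc.nonempty
    rw [Finset.mem_coe] at hz
    obtain ⟨i0, j0, rfl⟩ : ∃ (i0 : Fin 3) (j0 : Fin (L k l i0)), z = some ⟨i0, j0⟩ := by
      match z with
      | none => exact absurd hz hnone
      | some ⟨i0, j0⟩ => exact ⟨i0, j0, rfl⟩
    have hsingle : ∀ v ∈ s, ∃ j : Fin (L k l i0), v = some ⟨i0, j⟩ := by
      intro v hv
      match v with
      | none => exact absurd hv hnone
      | some ⟨i1, j1⟩ =>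
        by_cases hi : i1 = i0
        · subst hi; exact ⟨j1, rfl⟩
        · exfalso
          have hr := hc.preconnected ⟨some ⟨i0, j0⟩, by simpa using hz⟩
            ⟨some ⟨i1, j1⟩, by simpa using hv⟩
          obtain ⟨u, w, hu, hw, hPu, hPw, hadj⟩ :=
            cut_lemma (G k l) (↑s) (fun x => ∃ t : Fin (L k l i0), x = some ⟨i0, t⟩)
              hr ⟨j0, rfl⟩ (by
                rintro ⟨t, ht⟩
                simp only [Option.some.injEq] at ht
                exact hi (Fin.ext (sigma_val_iff.mp ht).1))
          obtain ⟨t, rfl, -⟩ := (by exact ⟨hPu.choose, hPu.choose_spec, trivial⟩ :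
            ∃ t : Fin (L k l i0), u = some ⟨i0, t⟩ ∧ True)
          rcases adj_some_cases hadj with ⟨rfl, -⟩ | ⟨t2, rfl, -⟩
          · exact hnone (by simpa using hw)
          · exact hPw ⟨t2, rfl⟩
    set T : Finset (Fin (L k l i0)) :=
      Finset.univ.filter (fun j => some ⟨i0, j⟩ ∈ s) with hT
    have hTne : T.Nonempty := ⟨j0, by simp [hT, hz]⟩
    have hic : ∀ j1 ∈ T, ∀ j3 ∈ T, ∀ j2 : Fin (L k l i0),
        (j1 : ℕ) ≤ (j2 : ℕ) → (j2 : ℕ) ≤ (j3 : ℕ) → j2 ∈ T := by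
      intro j1 hj1 j3 hj3 j2 h12 h23
      simp only [hT, Finset.mem_filter, Finset.mem_univ, true_and] at hj1 hj3 ⊢
      rcases Nat.lt_or_ge (j2 : ℕ) (j3 : ℕ) with hlt | hge
      · refine branch_gap s hc i0 j2 (some ⟨i0, j3⟩) (some ⟨i0, j1⟩) hj3 hj1 ⟨j3, rfl, hlt⟩ ?_
        rintro ⟨t, ht, htlt⟩
        simp only [Option.some.injEq] at ht
        have := (sigma_val_iff.mp ht).2
        omega
      · have : j2 = j3 := Fin.ext (by omega)
        exact this ▸ hj3
    obtain ⟨lo, hi, hlh, hhi, hchar⟩ := fin_interval T hTne hic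
    refine ⟨i0, lo, hi, hlh, hhi, ?_⟩
    ext v
    match v with
    | none =>
      simp only [none_not_mem_segSet, iff_false]
      exact hnone
    | some ⟨i, j⟩ =>
      rw [some_mem_segSet]
      by_cases hi0 : i = i0
      · subst hi0
        have : (some ⟨i, j⟩ ∈ s) ↔ j ∈ T := by simp [hT]
        rw [this, hchar j]
        simp
      · constructor
        · intro hv
          obtain ⟨j', hj'⟩ := hsingle _ hv
          simp only [Option.some.injEq] at hj'
          exact absurd (Fin.ext (sigma_val_iff.mp hj').1) hi0
        · rintro ⟨rfl, -⟩
          exact absurd rfl hi0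

lemma star_subset {a b c a' b' c' : ℕ} (h1 : a' ≤ a) (h2 : b' ≤ b) (h3 : c' ≤ c) :
    starSet k l a' b' c' ⊆ starSet k l a b c := by
  intro v hv
  match v with
  | none => exact none_mem_starSet
  | some ⟨i, j⟩ =>
    rw [some_mem_starSet] at hv ⊢
    fin_cases i <;> simp_all <;> omega

lemma seg_subset {i0 : Fin 3} {lo hi lo' hi' : ℕ} (h1 : lo ≤ lo') (h2 : hi' ≤ hi) :
    segSet k l i0 lo' hi' ⊆ segSet k l i0 lo hi := by
  intro v hv
  match v with
  | none => exact absurd hv none_not_mem_segSet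
  | some ⟨i, j⟩ =>
    rw [some_mem_segSet] at hv ⊢
    exact ⟨hv.1, by omega, by omega⟩

lemma seg_subset_star {a b c p q : ℕ} {i0 : Fin 3} (h : q ≤ ![a, b, c] i0) :
    segSet k l i0 p q ⊆ starSet k l a b c := by
  intro v hv
  match v with
  | none => exact absurd hv none_not_mem_segSet
  | some ⟨i, j⟩ =>
    rw [some_mem_segSet] at hv
    obtain ⟨rfl, h1, h2⟩ := hv
    rw [some_mem_starSet]
    omega

lemma sdiff_star_star_1 {a b c b' : ℕ} :
    starSet k l a b c \ starSet k l a b' c = segSet k l 1 b' b := by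
  ext v
  match v with
  | none => simp [none_mem_starSet, none_not_mem_segSet]
  | some ⟨i, j⟩ =>
    simp only [Finset.mem_sdiff, some_mem_starSet, some_mem_segSet]
    fin_cases i <;> simp <;> omega

lemma sdiff_star_star_2 {a b c c' : ℕ} :
    starSet k l a b c \ starSet k l a b c' = segSet k l 2 c' c := by
  ext v
  match v with
  | none => simp [none_mem_starSet, none_not_mem_segSet]
  | some ⟨i, j⟩ =>
    simp only [Finset.mem_sdiff, some_mem_starSet, some_mem_segSet]
    fin_cases i <;> simp <;> omega

lemma sdiff_star_star_0 {a b c a' : ℕ} :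
    starSet k l a b c \ starSet k l a' b c = segSet k l 0 a' a := by
  ext v
  match v with
  | none => simp [none_mem_starSet, none_not_mem_segSet]
  | some ⟨i, j⟩ =>
    simp only [Finset.mem_sdiff, some_mem_starSet, some_mem_segSet]
    fin_cases i <;> simp <;> omega

lemma sdiff_star_seg_2 {a b c p : ℕ} (hp : p ≤ c) :
    starSet k l a b c \ segSet k l 2 p c = starSet k l a b p := by
  ext v
  match v with
  | none => simp [none_mem_starSet, none_not_mem_segSet]
  | some ⟨i, j⟩ =>
    simp only [Finset.mem_sdiff, some_mem_starSet, some_mem_segSet]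
    fin_cases i <;> simp <;> omega

lemma sdiff_star_seg_1 {a b c p : ℕ} (hp : p ≤ b) :
    starSet k l a b c \ segSet k l 1 p b = starSet k l a p c := by
  ext v
  match v with
  | none => simp [none_mem_starSet, none_not_mem_segSet]
  | some ⟨i, j⟩ =>
    simp only [Finset.mem_sdiff, some_mem_starSet, some_mem_segSet]
    fin_cases i <;> simp <;> omega

lemma sdiff_seg_seg {i0 : Fin 3} {lo mid hi : ℕ} (h1 : lo ≤ mid) :
    segSet k l i0 lo hi \ segSet k l i0 lo mid = segSet k l i0 mid hi := by
  ext v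
  match v with
  | none => simp [none_not_mem_segSet]
  | some ⟨i, j⟩ =>
    simp only [Finset.mem_sdiff, some_mem_segSet]
    by_cases hii : i = i0
    · subst hii; simp; omega
    · simp [hii]

lemma exists_move (N : ℕ) (s : Finset (V k l)) (d : ℕ)
    (hcon : ConnOn (G k l) ↑s) (h1 : 1 ≤ d) (hdN : d ≤ N) (hdn : d ≤ s.card)
    (hbad : d = 1 ∨ s.card ≠ 2 * d) :
    ∃ t, CsgMove (G k l) (Set.Icc 1 N) s t ∧ t.card = s.card - d := by
  rcases eq_or_lt_of_le hdn with hdeq | hdlt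
  · -- remove everything
    refine ⟨∅, ⟨Finset.empty_subset s, ?_, ?_, ?_, Or.inl rfl⟩, by simp; omega⟩
    · rw [Finset.sdiff_empty]
      exact Finset.card_pos.mp (by omega)
    · rw [Finset.sdiff_empty, Set.mem_Icc]
      omega
    · rw [Finset.sdiff_empty]
      exact hcon
  rcases conn_classify s hcon with ⟨a, b, c, ha, hb, hc, rfl⟩ | ⟨i, lo, hi, hlh, hhi, rfl⟩
  · have hcard : (starSet k l a b c).card = 1 + a + b + c := card_starSet ha hb hc
    by_cases hdb : d ≤ b
    · refine ⟨starSet k l a (b - d) c, ⟨star_subset le_rfl (by omega) le_rfl, ?_, ?_, ?_,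
        Or.inr (connOn_starSet ha (by omega) hc)⟩, ?_⟩
      · rw [sdiff_star_star_1]
        apply Finset.card_pos.mp
        rw [card_segSet (by simpa using hb)]
        omega
      · rw [sdiff_star_star_1, Set.mem_Icc, card_segSet (by simpa using hb)]
        omega
      · rw [sdiff_star_star_1]
        exact connOn_segSet (by omega) (by simpa using hb)
      · rw [card_starSet ha (by omega) hc, hcard]
        omega
    by_cases hdc : d ≤ c
    · refine ⟨starSet k l a b (c - d), ⟨star_subset le_rfl le_rfl (by omega), ?_, ?_, ?_,
        Or.inr (connOn_starSet ha hb (by omega))⟩, ?_⟩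
      · rw [sdiff_star_star_2]
        apply Finset.card_pos.mp
        rw [card_segSet (by simpa using hc)]
        omega
      · rw [sdiff_star_star_2, Set.mem_Icc, card_segSet (by simpa using hc)]
        omega
      · rw [sdiff_star_star_2]
        exact connOn_segSet (by omega) (by simpa using hc)
      · rw [card_starSet ha hb (by omega), hcard]
        omega
    by_cases hcase : 1 + a + b ≤ d
    · set p := d - 1 - a - b with hp
      have hpc : p < c := by omega
      refine ⟨segSet k l 2 p c, ⟨seg_subset_star (by simp), ?_, ?_, ?_,
        Or.inr (connOn_segSet (by omega) (by simpa using hc))⟩, ?_⟩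
      · rw [sdiff_star_seg_2 (by omega)]
        exact ⟨none, none_mem_starSet⟩
      · rw [sdiff_star_seg_2 (by omega), Set.mem_Icc, card_starSet ha hb (by omega)]
        omega
      · rw [sdiff_star_seg_2 (by omega)]
        exact connOn_starSet ha hb (by omega)
      · rw [card_segSet (by simpa using hc), hcard]
        omega
    by_cases hcase2 : 1 + a + c ≤ d
    · set p := d - 1 - a - c with hp
      have hpb : p < b := by omega
      refine ⟨segSet k l 1 p b, ⟨seg_subset_star (by simp), ?_, ?_, ?_,
        Or.inr (connOn_segSet (by omega) (by simpa using hb))⟩, ?_⟩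
      · rw [sdiff_star_seg_1 (by omega)]
        exact ⟨none, none_mem_starSet⟩
      · rw [sdiff_star_seg_1 (by omega), Set.mem_Icc, card_starSet ha (by omega) hc]
        omega
      · rw [sdiff_star_seg_1 (by omega)]
        exact connOn_starSet ha (by omega) hc
      · rw [card_segSet (by simpa using hb), hcard]
        omega
    by_cases hlast : a = 1 ∧ d = 1
    · refine ⟨starSet k l 0 b c, ⟨star_subset (by omega) le_rfl le_rfl, ?_, ?_, ?_,
        Or.inr (connOn_starSet (by omega) hb hc)⟩, ?_⟩
      · rw [sdiff_star_star_0]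
        apply Finset.card_pos.mp
        rw [card_segSet (by simpa using ha)]
        omega
      · rw [sdiff_star_star_0, Set.mem_Icc, card_segSet (by simpa using ha)]
        omega
      · rw [sdiff_star_star_0]
        exact connOn_segSet (by omega) (by simpa using ha)
      · rw [card_starSet (by omega) hb hc, hcard]
        omega
    · exfalso
      rw [hcard] at hdlt hbad
      rcases hbad with h | h
      · omega
      · omega
  · have hcard : (segSet k l i lo hi).card = hi - lo := card_segSet hhi
    refine ⟨segSet k l i lo (hi - d), ⟨seg_subset le_rfl (by omega), ?_, ?_, ?_,
      Or.inr (connOn_segSet (by omega) (le_trans (by omega) hhi))⟩, ?_⟩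
    · rw [sdiff_seg_seg (by omega)]
      apply Finset.card_pos.mp
      rw [card_segSet hhi]
      omega
    · rw [sdiff_seg_seg (by omega), Set.mem_Icc, card_segSet hhi]
      omega
    · rw [sdiff_seg_seg (by omega)]
      exact connOn_segSet (by omega) hhi
    · rw [card_segSet (le_trans (by omega) hhi), hcard]
      omega

end


lemma mex_eq_zero {S : Set ℕ} (h : 0 ∉ S) : mex S = 0 :=
  Nat.sInf_eq_zero.mpr (Or.inl h)

lemma mex_eq_one {S : Set ℕ} (h0 : 0 ∈ S) (h1 : 1 ∉ S) : mex S = 1 := by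
  unfold mex
  have hle : sInf {n | n ∉ S} ≤ 1 := Nat.sInf_le h1
  have hne : sInf {n | n ∉ S} ≠ 0 := by
    intro h
    rcases Nat.sInf_eq_zero.mp h with h | h
    · exact h h0
    · exact absurd h (Set.nonempty_iff_ne_empty.mp ⟨1, h1⟩)
  omega

lemma two_le_mex {S : Set ℕ} (hfin : S.Finite) (h0 : 0 ∈ S) (h1 : 1 ∈ S) : 2 ≤ mex S := by
  have hne : {n | n ∉ S}.Nonempty := by
    rcases (hfin.infinite_compl).nonempty with ⟨x, hx⟩
    exact ⟨x, hx⟩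
  have hmem := Nat.sInf_mem hne
  unfold mex
  rcases Nat.lt_or_ge (sInf {n | n ∉ S}) 2 with h | h
  · interval_cases hh : (sInf {n | n ∉ S}) <;> simp_all
  · exact h


lemma csgGrundy_def {W : Type*} [DecidableEq W] (G : SimpleGraph W) (L : Set ℕ) (s : Finset W) :
    csgGrundy G L s
      = mex (Set.range fun t : {t : Finset W // CsgMove G L s t} => csgGrundy G L t.1) := by
  rw [csgGrundy]

lemma csgGrundy_empty {W : Type*} [DecidableEq W] (G : SimpleGraph W) (L : Set ℕ) :
    csgGrundy G L (∅ : Finset W) = 0 := by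
  rw [csgGrundy_def]
  apply mex_eq_zero
  rintro ⟨⟨t, hm⟩, -⟩
  have h := hm.2.1
  rw [Finset.empty_sdiff] at h
  exact Finset.not_nonempty_empty h

lemma sub_mod (n d M : ℕ) (h1 : 1 ≤ d) (h2 : d ≤ M) (h3 : d ≤ n) :
    (n - d) % (M + 1)
      = if d ≤ n % (M + 1) then n % (M + 1) - d else n % (M + 1) + (M + 1) - d := by
  set r := n % (M + 1) with hrdef
  have hr : r < M + 1 := Nat.mod_lt _ (by omega)
  have hrn : r ≤ n := Nat.mod_le _ _
  have hdvd : (M + 1) ∣ (n - r) := Nat.dvd_sub_mod n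
  split_ifs with h
  · obtain ⟨e, he⟩ := hdvd
    have heq : n - d = (M + 1) * e + (r - d) := by omega
    rw [heq, Nat.mul_add_mod]
    exact Nat.mod_eq_of_lt (by omega)
  · have hge : n - r ≥ M + 1 := Nat.le_of_dvd (by omega) hdvd
    obtain ⟨e, he⟩ := Nat.dvd_sub hdvd (dvd_refl (M + 1))
    have heq : n - d = (M + 1) * e + (r + (M + 1) - d) := by omega
    rw [heq, Nat.mul_add_mod]
    exact Nat.mod_eq_of_lt (by omega)

section
variable {k l : ℕ}

lemma main_lemma (N : ℕ) (hN : 1 ≤ N) :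
    ∀ (n : ℕ) (s : Finset (V k l)), s.card ≤ n → ConnOn (G k l) ↑s →
      (s.card % (N + 1) = 0 → csgGrundy (G k l) (Set.Icc 1 N) s = 0) ∧
      (s.card % (N + 1) = 1 → csgGrundy (G k l) (Set.Icc 1 N) s = 1) ∧
      (2 ≤ s.card % (N + 1) → 2 ≤ csgGrundy (G k l) (Set.Icc 1 N) s) := by
  intro n
  induction n with
  | zero =>
    intro s hcard hcon
    exfalso
    obtain ⟨⟨x, hx⟩⟩ := hcon.nonempty
    rw [Finset.mem_coe] at hx
    have : s = ∅ := Finset.card_eq_zero.mp (by omega)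
    subst this
    simp at hx
  | succ n ih =>
    intro s hcard hcon
    have hpos : 1 ≤ s.card := by
      obtain ⟨⟨x, hx⟩⟩ := hcon.nonempty
      rw [Finset.mem_coe] at hx
      exact Finset.card_pos.mpr ⟨x, hx⟩
    have hrlt : s.card % (N + 1) < N + 1 := Nat.mod_lt _ (by omega)
    -- facts about any move
    have hmove_facts : ∀ t : Finset (V k l), CsgMove (G k l) (Set.Icc 1 N) s t →
        ∃ d, 1 ≤ d ∧ d ≤ N ∧ d ≤ s.card ∧ t.card = s.card - d := by
      intro t hm
      refine ⟨(s \ t).card, ?_, ?_, ?_, ?_⟩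
      · exact (Set.mem_Icc.mp hm.2.2.1).1
      · exact (Set.mem_Icc.mp hm.2.2.1).2
      · exact Finset.card_le_card (Finset.sdiff_subset)
      · rw [Finset.card_sdiff_of_subset hm.1]
        have := Finset.card_le_card hm.1
        omega
    have hopt : ∀ t : Finset (V k l), CsgMove (G k l) (Set.Icc 1 N) s t →
        (csgGrundy (G k l) (Set.Icc 1 N) t = 0 ↔ t.card % (N + 1) = 0) ∧
        (csgGrundy (G k l) (Set.Icc 1 N) t = 1 ↔ t.card % (N + 1) = 1) := by
      intro t hm
      rcases hm.2.2.2.2 with rfl | hconn_t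
      · rw [csgGrundy_empty]
        constructor
        · simp
        · constructor
          · omega
          · intro h; simp at h
      · have hlt : t.card ≤ n := by
          have : t.card < s.card := by
            obtain ⟨x, hx⟩ := hm.2.1
            rw [Finset.mem_sdiff] at hx
            exact Finset.card_lt_card ((Finset.ssubset_iff_of_subset hm.1).2 ⟨x, hx.1, hx.2⟩)
          omega
        obtain ⟨ih0, ih1, ih2⟩ := ih t hlt hconn_t
        constructor
        · constructor
          · intro h0
            by_contra hne
            rcases (show t.card % (N + 1) = 1 ∨ 2 ≤ t.card % (N + 1) by omega) with h | h
            · rw [ih1 h] at h0; omega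
            · have := ih2 h; omega
          · exact ih0
        · constructor
          · intro h1'
            by_contra hne
            rcases (show t.card % (N + 1) = 0 ∨ 2 ≤ t.card % (N + 1) by omega) with h | h
            · rw [ih0 h] at h1'; omega
            · have := ih2 h; omega
          · exact ih1
    refine ⟨?_, ?_, ?_⟩
    · -- residue 0
      intro hr0
      rw [csgGrundy_def]
      apply mex_eq_zero
      rintro ⟨⟨t, hm⟩, hval⟩
      simp only at hval
      obtain ⟨d, hd1, hdN, hdn, htcard⟩ := hmove_facts t hm
      have ht0 := ((hopt t hm).1).mp hval
      rw [htcard, sub_mod s.card d N hd1 hdN hdn] at ht0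
      split_ifs at ht0 <;> omega
    · -- residue 1
      intro hr1
      rw [csgGrundy_def]
      apply mex_eq_one
      · -- 0 is an option
        obtain ⟨t, hm, htcard⟩ := exists_move N s 1 hcon le_rfl hN hpos (Or.inl rfl)
        refine ⟨⟨t, hm⟩, ?_⟩
        simp only
        apply ((hopt t hm).1).mpr
        rw [htcard, sub_mod s.card 1 N le_rfl hN hpos]
        split_ifs <;> omega
      · rintro ⟨⟨t, hm⟩, hval⟩
        simp only at hval
        obtain ⟨d, hd1, hdN, hdn, htcard⟩ := hmove_facts t hm
        have ht1 := ((hopt t hm).2).mp hval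
        rw [htcard, sub_mod s.card d N hd1 hdN hdn] at ht1
        split_ifs at ht1 <;> omega
    · -- residue ≥ 2
      intro hr2
      rw [csgGrundy_def]
      apply two_le_mex (Set.finite_range _)
      · -- 0 is an option : remove r
        set r := s.card % (N + 1) with hrdef
        have hrn : r ≤ s.card := Nat.mod_le _ _
        have hbad : s.card ≠ 2 * r := by
          intro habs
          have h2r : (2 * r) % (N + 1) = r := by rw [← habs]
          rcases Nat.lt_or_ge (2 * r) (N + 1) with h | h
          · rw [Nat.mod_eq_of_lt h] at h2r; omega
          · rw [Nat.mod_eq_sub_mod h, Nat.mod_eq_of_lt (by omega)] at h2r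
            omega
        obtain ⟨t, hm, htcard⟩ := exists_move N s r hcon (by omega) (by omega) hrn (Or.inr hbad)
        refine ⟨⟨t, hm⟩, ?_⟩
        simp only
        apply ((hopt t hm).1).mpr
        rw [htcard, sub_mod s.card r N (by omega) (by omega) hrn]
        split_ifs <;> omega
      · -- 1 is an option : remove r - 1
        set r := s.card % (N + 1) with hrdef
        have hrn : r - 1 ≤ s.card := by
          have := Nat.mod_le s.card (N + 1)
          omega
        have hbad : r - 1 = 1 ∨ s.card ≠ 2 * (r - 1) := by
          rcases (show r = 2 ∨ 3 ≤ r by omega) with h | h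
          · left; omega
          · right
            intro habs
            have h2r : (2 * (r - 1)) % (N + 1) = r := by rw [← habs]
            rcases Nat.lt_or_ge (2 * (r - 1)) (N + 1) with hlt | hge
            · rw [Nat.mod_eq_of_lt hlt] at h2r; omega
            · rw [Nat.mod_eq_sub_mod hge, Nat.mod_eq_of_lt (by omega)] at h2r
              omega
        obtain ⟨t, hm, htcard⟩ := exists_move N s (r - 1) hcon (by omega) (by omega) hrn hbad
        refine ⟨⟨t, hm⟩, ?_⟩
        simp only
        apply ((hopt t hm).2).mpr
        rw [htcard, sub_mod s.card (r - 1) N (by omega) (by omega) hrn]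
        split_ifs <;> omega

lemma univ_eq_starSet : (Finset.univ : Finset (V k l)) = starSet k l 1 k l := by
  ext v
  simp only [Finset.mem_univ, true_iff]
  match v with
  | none => exact none_mem_starSet
  | some ⟨i, j⟩ =>
    rw [some_mem_starSet]
    have := j.isLt
    fin_cases i <;> simpa using this

end

/-- For CSG({1,…,N}), N ≥ 3: the Grundy value of S(1,k,l) is 0 if its number of
vertices k+l+2 is ≡ 0 mod (N+1), is 1 if k+l+2 ≡ 1 mod (N+1), and exceeds 1
otherwise. -/
theorem stmt11 (N k l : ℕ) (hN : 3 ≤ N) :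
    ((k + l + 2) % (N + 1) = 0 →
      csgGrundy (subdividedStar ![1, k, l]) (Set.Icc 1 N) Finset.univ = 0) ∧
    ((k + l + 2) % (N + 1) = 1 →
      csgGrundy (subdividedStar ![1, k, l]) (Set.Icc 1 N) Finset.univ = 1) ∧
    ((k + l + 2) % (N + 1) ≠ 0 → (k + l + 2) % (N + 1) ≠ 1 →
      1 < csgGrundy (subdividedStar ![1, k, l]) (Set.Icc 1 N) Finset.univ) := by
  have hcu : (Finset.univ : Finset (V k l)).card = k + l + 2 := by
    rw [univ_eq_starSet, card_starSet le_rfl le_rfl le_rfl]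
    omega
  have hconn : ConnOn (G k l) ↑(Finset.univ : Finset (V k l)) := by
    rw [univ_eq_starSet]
    exact connOn_starSet le_rfl le_rfl le_rfl
  obtain ⟨h0, h1, h2⟩ := main_lemma N (by omega) (Finset.univ : Finset (V k l)).card
    Finset.univ le_rfl hconn
  rw [hcu] at h0 h1 h2
  refine ⟨h0, h1, fun hne0 hne1 => ?_⟩
  have h2le : 2 ≤ (k + l + 2) % (N + 1) := by omega
  exact h2 h2le
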